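/- Let p be a positive integer and let π = {B₁,…,B_p} be a pairing of {1,…,2p}, with the blocks listed in increasing order of their minimal elements. Let C be a unital algebra over ℂ and let V₁,…,V_p be invertible elements of C satisfying V_l V_m = γ_{lm} V_m V_l for all 1 ≤ l < m ≤ p, where the γ_{lm} are complex numbers. Define W₁,…,W_{2p} ∈ C by W_i = V_l if i = min(B_l) and W_i = V_m^{-1} if i = max(B_m). Then W₁W₂⋯W_{2p} = (∏_{1≤l<m≤p, B_l crosses B_m} γ_{lm}) · 1. -/

import Mathlib

noncomputable section

/-- A pairing of `{0, 1, ..., 2p-1}` into `p` two-element blocks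
`{lo i, hi i}`, listed in increasing order of their minimal elements. -/
structure Pairing (p : ℕ) where
  lo : Fin p → Fin (2 * p)
  hi : Fin p → Fin (2 * p)
  lo_lt_hi : ∀ i, lo i < hi i
  lo_strictMono : StrictMono lo
  mem_unique : ∀ x : Fin (2 * p), ∃! i, x = lo i ∨ x = hi i

namespace Pairing

variable {p : ℕ}

/-- Blocks `i` and `j` of a pairing cross. -/
def Cross (π : Pairing p) (i j : Fin p) : Prop :=
  (π.lo i < π.lo j ∧ π.lo j < π.hi i ∧ π.hi i < π.hi j) ∨
  (π.lo j < π.lo i ∧ π.lo i < π.hi j ∧ π.hi j < π.hi i)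

lemma lo_inj (π : Pairing p) {l m : Fin p} (h : π.lo l = π.lo m) : l = m :=
  π.lo_strictMono.injective h

lemma hi_inj (π : Pairing p) {l m : Fin p} (h : π.hi l = π.hi m) : l = m := by
  obtain ⟨i, _, hu⟩ := π.mem_unique (π.hi m)
  exact (hu l (Or.inr h.symm)).trans (hu m (Or.inr rfl)).symm

lemma lo_ne_hi (π : Pairing p) (l m : Fin p) : π.lo l ≠ π.hi m := by
  intro h
  by_cases hlm : l = m
  · subst hlm; exact absurd (h ▸ π.lo_lt_hi l) (lt_irrefl _)
  · obtain ⟨i, _, hu⟩ := π.mem_unique (π.hi m)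
    exact hlm ((hu l (Or.inl h.symm)).trans (hu m (Or.inr rfl)).symm)

/-- The block index of a position. -/
noncomputable def idx (π : Pairing p) (z : Fin (2*p)) : Fin p :=
  (π.mem_unique z).exists.choose

lemma idx_spec (π : Pairing p) (z : Fin (2*p)) :
    z = π.lo (π.idx z) ∨ z = π.hi (π.idx z) :=
  (π.mem_unique z).exists.choose_spec

lemma idx_eq (π : Pairing p) {z : Fin (2*p)} {i : Fin p}
    (h : z = π.lo i ∨ z = π.hi i) : π.idx z = i := by
  obtain ⟨j, _, hu⟩ := π.mem_unique z
  exact (hu _ (π.idx_spec z)).trans (hu i h).symm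

/-- The key of a position: `2m` for `lo m`, `2m+1` for `hi m`. -/
noncomputable def K (π : Pairing p) (z : Fin (2*p)) : ℕ :=
  2*(π.idx z : ℕ) + if z = π.lo (π.idx z) then 0 else 1

lemma K_lo (π : Pairing p) (m : Fin p) : π.K (π.lo m) = 2*(m:ℕ) := by
  unfold K; rw [π.idx_eq (Or.inl rfl)]; simp

lemma K_hi (π : Pairing p) (m : Fin p) : π.K (π.hi m) = 2*(m:ℕ)+1 := by
  unfold K; rw [π.idx_eq (Or.inr rfl), if_neg (fun h => π.lo_ne_hi m m h.symm)]

end Pairing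

section Helpers

theorem fin_strictMono_id {n : ℕ} (f : Fin n → Fin n) (hf : StrictMono f) : ∀ x, f x = x := by
  have hwf : WellFoundedLT (Fin n) := inferInstance
  have hsurj : Function.Surjective f := Finite.injective_iff_surjective.mp hf.injective
  have h2 := @StrictMono.range_inj (Fin n) (Fin n) _ _ hwf f id hf strictMono_id
  have h : f = id := by
    apply h2.1
    simp [Set.range_eq_univ.2 hsurj]
  intro x; rw [h]; rfl

theorem strictMono_of_adj {n : ℕ} (f : Fin n → ℕ)
    (h : ∀ (k : ℕ) (hk : k + 1 < n), f ⟨k, by omega⟩ < f ⟨k+1, hk⟩) : StrictMono f := by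
  have key : ∀ (d : ℕ) (x y : Fin n), (y : ℕ) = (x : ℕ) + d + 1 → f x < f y := by
    intro d
    induction d with
    | zero => intro x y hxy
              have hx : x = (⟨(y:ℕ)-1, by omega⟩ : Fin n) := by ext; simp; omega
              rw [hx]
              have := h ((y:ℕ)-1) (by omega)
              convert this using 2
              ext; simp; omega
    | succ d ih =>
      intro x y hxy
      have h1 := ih x ⟨(x:ℕ)+d+1, by omega⟩ rfl
      have h2 := h ((x:ℕ)+d+1) (by omega)
      have hy : y = (⟨(x:ℕ)+d+1+1, by omega⟩ : Fin n) := by ext; simp; omega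
      rw [hy]
      exact h1.trans h2
  intro x y hxy
  exact key ((y:ℕ) - (x:ℕ) - 1) x y (by have := Fin.lt_def.mp hxy; omega)

theorem prod_pairs {C : Type*} [Monoid C] : ∀ (n : ℕ) (W : Fin (2*n) → C),
    (∀ (k : ℕ) (hk : 2*k+1 < 2*n), W ⟨2*k, by omega⟩ * W ⟨2*k+1, hk⟩ = 1) →
    (List.ofFn W).prod = 1 := by
  intro n
  induction n with
  | zero => intro W _; exact (by rw [show List.ofFn W = [] from List.ofFn_zero, List.prod_nil] : (List.ofFn W).prod = 1)
  | succ m ih =>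
    intro W hW
    have h2 : (2 : ℕ) * (m+1) = (2*m+1)+1 := by ring
    rw [List.ofFn_congr h2 W, List.ofFn_succ, List.ofFn_succ, List.prod_cons, List.prod_cons]
    have hrest : (List.ofFn fun (i : Fin (2*m)) =>
        W (Fin.cast h2.symm i.succ.succ)).prod = 1 := by
      apply ih
      intro k hk
      have e1 : (Fin.cast h2.symm ((⟨2*k, by omega⟩ : Fin (2*m)).succ.succ)) =
          (⟨2*(k+1), by omega⟩ : Fin (2*(m+1))) := by ext; simp; omega
      have e2 : (Fin.cast h2.symm ((⟨2*k+1, hk⟩ : Fin (2*m)).succ.succ)) =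
          (⟨2*(k+1)+1, by omega⟩ : Fin (2*(m+1))) := by ext; simp; omega
      rw [e1, e2]
      exact hW (k+1) (by omega)
    rw [hrest, mul_one]
    have e0 : (Fin.cast h2.symm (0 : Fin (2*m+1+1))) = (⟨2*0, by omega⟩ : Fin (2*(m+1))) := by
      ext; simp
    have e1 : (Fin.cast h2.symm ((0 : Fin (2*m+1)).succ)) =
        (⟨2*0+1, by omega⟩ : Fin (2*(m+1))) := by ext; simp; exact Nat.mod_eq_of_lt (by omega)
    rw [e0, e1]
    exact hW 0 (by omega)

theorem dec_list {α : Type*} (n : ℕ) (W : Fin n → α) (i : ℕ) (h : i + 1 < n) :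
    List.ofFn W = (List.ofFn W).take i ++ W ⟨i, by omega⟩ :: W ⟨i+1, h⟩ :: (List.ofFn W).drop (i+2) := by
  conv_lhs => rw [← List.take_append_drop i (List.ofFn W)]
  congr 1
  rw [List.drop_eq_getElem_cons (by simp; omega), List.drop_eq_getElem_cons (by simp; omega)]
  simp [List.getElem_ofFn]

theorem list_swap_prod {C : Type*} [Ring C] [Algebra ℂ C] {n : ℕ} (W : Fin n → C)
    (x y : Fin n) (hxy : (y : ℕ) = (x : ℕ) + 1) (c : ℂ)
    (hc : W x * W y = c • (W y * W x)) :
    (List.ofFn W).prod = c • (List.ofFn (W ∘ Equiv.swap x y)).prod := by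
  have hx : ((x : ℕ) : ℕ) + 1 < n := by omega
  have hxe : (⟨(x:ℕ), by omega⟩ : Fin n) = x := by ext; rfl
  have hye : (⟨(x:ℕ)+1, hx⟩ : Fin n) = y := by ext; simp [hxy]
  have hW := dec_list n W (x:ℕ) hx
  have hW' := dec_list n (W ∘ Equiv.swap x y) (x:ℕ) hx
  rw [hxe, hye] at hW hW'
  have hsx : (W ∘ Equiv.swap x y) x = W y := by simp
  have hsy : (W ∘ Equiv.swap x y) y = W x := by simp
  rw [hsx, hsy] at hW'
  have htake : (List.ofFn (W ∘ Equiv.swap x y)).take (x:ℕ) = (List.ofFn W).take (x:ℕ) := by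
    apply List.ext_getElem (by simp)
    intro j h1 h2
    simp only [List.getElem_take, List.getElem_ofFn]
    have hj : j < (x:ℕ) := by simpa using h1
    have : Equiv.swap x y ⟨j, by omega⟩ = ⟨j, by omega⟩ :=
      Equiv.swap_apply_of_ne_of_ne (by intro hh; rw [Fin.ext_iff] at hh; simp at hh; omega)
        (by intro hh; rw [Fin.ext_iff] at hh; simp at hh; omega)
    simp [Function.comp, this]
  have hdrop : (List.ofFn (W ∘ Equiv.swap x y)).drop ((x:ℕ)+2) = (List.ofFn W).drop ((x:ℕ)+2) := by
    apply List.ext_getElem (by simp)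
    intro j h1 h2
    simp only [List.getElem_drop, List.getElem_ofFn]
    have hj : (x:ℕ) + 2 + j < n := by simp at h1; omega
    have : Equiv.swap x y ⟨(x:ℕ)+2+j, hj⟩ = ⟨(x:ℕ)+2+j, hj⟩ :=
      Equiv.swap_apply_of_ne_of_ne (by intro hh; rw [Fin.ext_iff] at hh; simp at hh; omega)
        (by intro hh; rw [Fin.ext_iff] at hh; simp at hh; omega)
    simp [Function.comp, this]
  rw [hW, hW', htake, hdrop]
  simp only [List.prod_append, List.prod_cons]
  rw [← mul_assoc (W x) (W y), hc]
  simp only [smul_mul_assoc, mul_smul_comm, mul_assoc]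

theorem swap_lt_iff {N : ℕ} (x y u v : Fin N) (hxy : (y:ℕ) = (x:ℕ) + 1) (huv : u ≠ v)
    (h1 : ¬(u = x ∧ v = y)) (h2 : ¬(u = y ∧ v = x)) :
    Equiv.swap x y u < Equiv.swap x y v ↔ u < v := by
  rw [ne_eq, Fin.ext_iff] at huv
  rw [Fin.ext_iff, Fin.ext_iff] at h1 h2
  simp only [Equiv.swap_apply_def]
  split_ifs <;>
    simp only [Fin.lt_def, Fin.ext_iff] at * <;>
    omega

theorem unit_comm₁ {C : Type*} [Ring C] [Algebra ℂ C] (u v : Cˣ) (c : ℂ)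
    (h : (v:C)*(u:C) = c • ((u:C)*(v:C))) :
    (u:C) * ((v⁻¹:Cˣ):C) = c • (((v⁻¹:Cˣ):C) * (u:C)) := by
  have h2 : (u : C) = c • (((v⁻¹:Cˣ):C) * (u:C) * (v:C)) := by
    calc (u:C) = ((v⁻¹:Cˣ):C) * ((v:C) * (u:C)) := by
          rw [← mul_assoc]; simp
      _ = ((v⁻¹:Cˣ):C) * (c • ((u:C)*(v:C))) := by rw [h]
      _ = c • (((v⁻¹:Cˣ):C) * (u:C) * (v:C)) := by rw [mul_smul_comm, mul_assoc]
  calc (u:C) * ((v⁻¹:Cˣ):C)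
      = (c • (((v⁻¹:Cˣ):C) * (u:C) * (v:C))) * ((v⁻¹:Cˣ):C) := by rw [← h2]
    _ = c • (((v⁻¹:Cˣ):C) * (u:C)) := by rw [smul_mul_assoc, mul_assoc]; simp

theorem unit_comm₂ {C : Type*} [Ring C] [Algebra ℂ C] (u v : Cˣ) (c : ℂ)
    (h : (v:C)*(u:C) = c • ((u:C)*(v:C))) :
    ((v⁻¹:Cˣ):C) * ((u⁻¹:Cˣ):C) = c • (((u⁻¹:Cˣ):C) * ((v⁻¹:Cˣ):C)) := by
  have h' := unit_comm₁ u v c h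
  have := unit_comm₁ (v⁻¹) u c (by simpa using h')
  simpa using this

open Pairing in
theorem cross_swap_iff {p : ℕ} (π : Pairing p) (x y : Fin (2*p)) (hxy : (y:ℕ) = (x:ℕ)+1)
    (a b : Fin p) (hy : y = π.hi b) (hx : x = π.lo a ∨ x = π.hi a)
    (π' : Pairing p) (hlo' : ∀ m, π'.lo m = Equiv.swap x y (π.lo m))
    (hhi' : ∀ m, π'.hi m = Equiv.swap x y (π.hi m))
    (l m : Fin p) (hlm : l ≠ m) (h1 : ¬(l = a ∧ m = b)) (h2 : ¬(l = b ∧ m = a)) :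
    π'.Cross l m ↔ π.Cross l m := by
  have key : ∀ u v : Fin (2*p), u ≠ v → ¬(u = x ∧ v = y) → ¬(u = y ∧ v = x) →
      (Equiv.swap x y u < Equiv.swap x y v ↔ u < v) :=
    fun u v => swap_lt_iff x y u v hxy
  rcases hx with hx | hx
  · -- x = lo a
    have c1 : π'.lo l < π'.lo m ↔ π.lo l < π.lo m := by
      rw [hlo', hlo']
      exact key _ _ (fun h => hlm (π.lo_inj h))
        (fun h => π.lo_ne_hi m b (h.2.trans hy)) (fun h => π.lo_ne_hi l b (h.1.trans hy))
    have c2 : π'.lo m < π'.hi l ↔ π.lo m < π.hi l := by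
      rw [hlo', hhi']
      exact key _ _ (fun h => π.lo_ne_hi m l h)
        (fun h => h2 ⟨π.hi_inj (h.2.trans hy), π.lo_inj (h.1.trans hx)⟩)
        (fun h => π.lo_ne_hi m b (h.1.trans hy))
    have c3 : π'.hi l < π'.hi m ↔ π.hi l < π.hi m := by
      rw [hhi', hhi']
      exact key _ _ (fun h => hlm (π.hi_inj h))
        (fun h => π.lo_ne_hi a l (h.1.trans hx).symm)
        (fun h => π.lo_ne_hi a m (h.2.trans hx).symm)
    have c4 : π'.lo m < π'.lo l ↔ π.lo m < π.lo l := by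
      rw [hlo', hlo']
      exact key _ _ (fun h => hlm (π.lo_inj h).symm)
        (fun h => π.lo_ne_hi l b (h.2.trans hy)) (fun h => π.lo_ne_hi m b (h.1.trans hy))
    have c5 : π'.lo l < π'.hi m ↔ π.lo l < π.hi m := by
      rw [hlo', hhi']
      exact key _ _ (fun h => π.lo_ne_hi l m h)
        (fun h => h1 ⟨π.lo_inj (h.1.trans hx), π.hi_inj (h.2.trans hy)⟩)
        (fun h => π.lo_ne_hi l b (h.1.trans hy))
    have c6 : π'.hi m < π'.hi l ↔ π.hi m < π.hi l := by
      rw [hhi', hhi']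
      exact key _ _ (fun h => hlm (π.hi_inj h).symm)
        (fun h => π.lo_ne_hi a m (h.1.trans hx).symm)
        (fun h => π.lo_ne_hi a l (h.2.trans hx).symm)
    unfold Pairing.Cross
    rw [c1, c2, c3, c4, c5, c6]
  · -- x = hi a
    have c1 : π'.lo l < π'.lo m ↔ π.lo l < π.lo m := by
      rw [hlo', hlo']
      exact key _ _ (fun h => hlm (π.lo_inj h))
        (fun h => π.lo_ne_hi m b (h.2.trans hy)) (fun h => π.lo_ne_hi l b (h.1.trans hy))
    have c2 : π'.lo m < π'.hi l ↔ π.lo m < π.hi l := by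
      rw [hlo', hhi']
      exact key _ _ (fun h => π.lo_ne_hi m l h)
        (fun h => π.lo_ne_hi m a (h.1.trans hx))
        (fun h => π.lo_ne_hi m b (h.1.trans hy))
    have c3 : π'.hi l < π'.hi m ↔ π.hi l < π.hi m := by
      rw [hhi', hhi']
      exact key _ _ (fun h => hlm (π.hi_inj h))
        (fun h => h1 ⟨π.hi_inj (h.1.trans hx), π.hi_inj (h.2.trans hy)⟩)
        (fun h => h2 ⟨π.hi_inj (h.1.trans hy), π.hi_inj (h.2.trans hx)⟩)
    have c4 : π'.lo m < π'.lo l ↔ π.lo m < π.lo l := by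
      rw [hlo', hlo']
      exact key _ _ (fun h => hlm (π.lo_inj h).symm)
        (fun h => π.lo_ne_hi l b (h.2.trans hy)) (fun h => π.lo_ne_hi m b (h.1.trans hy))
    have c5 : π'.lo l < π'.hi m ↔ π.lo l < π.hi m := by
      rw [hlo', hhi']
      exact key _ _ (fun h => π.lo_ne_hi l m h)
        (fun h => π.lo_ne_hi l a (h.1.trans hx))
        (fun h => π.lo_ne_hi l b (h.1.trans hy))
    have c6 : π'.hi m < π'.hi l ↔ π.hi m < π.hi l := by
      rw [hhi', hhi']
      exact key _ _ (fun h => hlm (π.hi_inj h).symm)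
        (fun h => h2 ⟨π.hi_inj (h.2.trans hy), π.hi_inj (h.1.trans hx)⟩)
        (fun h => h1 ⟨π.hi_inj (h.2.trans hx), π.hi_inj (h.1.trans hy)⟩)
    unfold Pairing.Cross
    rw [c1, c2, c3, c4, c5, c6]

end Helpers

open scoped Classical in
theorem aux_pairing {C : Type*} [Ring C] [Algebra ℂ C] {p : ℕ}
    (V : Fin p → Cˣ) (γ : Fin p → Fin p → ℂ)
    (hcomm : ∀ l m : Fin p, l < m → (V l : C) * (V m : C) = γ l m • ((V m : C) * (V l : C)))
    (hγ : ∀ l m : Fin p, l < m → γ l m ≠ 0) :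
    ∀ (n : ℕ) (π : Pairing p) (W : Fin (2*p) → C),
      (∀ l, W (π.lo l) = V l) → (∀ m, W (π.hi m) = ((V m)⁻¹ : Cˣ)) →
      (∑ m : Fin p, (p - (m:ℕ)) * ((π.hi m : ℕ))) = n →
      (List.ofFn W).prod =
        (∏ lm ∈ Finset.univ.filter
            (fun lm : Fin p × Fin p => lm.1 < lm.2 ∧ π.Cross lm.1 lm.2),
          γ lm.1 lm.2) • (1 : C) := by
  intro n
  induction n using Nat.strong_induction_on with
  | _ n ih =>
  intro π W hWlo hWhi hμ
  by_cases hdesc : ∃ (a b : Fin p) (x y : Fin (2*p)), (y:ℕ) = (x:ℕ) + 1 ∧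
      ((x = π.lo a ∧ y = π.hi b ∧ a ≠ b) ∨ (x = π.hi a ∧ y = π.hi b ∧ b < a))
  · -- descent case
    obtain ⟨a, b, x, y, hxy, hcase⟩ := hdesc
    set s : Equiv.Perm (Fin (2*p)) := Equiv.swap x y with hs
    have hss : ∀ z, s (s z) = z := fun z => Equiv.swap_apply_self x y z
    have hsx : s x = y := Equiv.swap_apply_left x y
    have hsy : s y = x := Equiv.swap_apply_right x y
    have hsfix : ∀ z, z ≠ x → z ≠ y → s z = z := fun z h1 h2 =>
      Equiv.swap_apply_of_ne_of_ne h1 h2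
    have huniq : ∀ z : Fin (2*p), ∃! i, z = s (π.lo i) ∨ z = s (π.hi i) := by
      intro z
      obtain ⟨i, hi1, hi2⟩ := π.mem_unique (s z)
      refine ⟨i, ?_, ?_⟩
      · rcases hi1 with h | h
        · left; rw [← h, hss]
        · right; rw [← h, hss]
      · intro j hj
        apply hi2
        rcases hj with h | h
        · left; rw [h, hss]
        · right; rw [h, hss]
    rcases hcase with ⟨hxa, hyb, hab⟩ | ⟨hxa, hyb, hba⟩
    · -- Case A : x = lo a, y = hi b
      have hyv : (y:ℕ) = (π.hi b:ℕ) := congrArg Fin.val hyb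
      have hxv : (x:ℕ) = (π.lo a:ℕ) := congrArg Fin.val hxa
      have hlobx : (π.lo b : ℕ) < (x:ℕ) := by
        have h1 := Fin.lt_def.mp (π.lo_lt_hi b)
        have h2 : (π.lo b:ℕ) ≠ (x:ℕ) := fun hh => hab (π.lo_inj ((Fin.ext hh).trans hxa)).symm
        omega
      have hlba : b < a := by
        have h3 : π.lo b < π.lo a := by
          rw [← hxa]; exact Fin.lt_def.mpr hlobx
        exact π.lo_strictMono.lt_iff_lt.mp h3
      have hhiay : (y:ℕ) < (π.hi a:ℕ) := by
        have h1 := Fin.lt_def.mp (π.lo_lt_hi a)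
        have h2 : (π.hi a:ℕ) ≠ (y:ℕ) := fun hh => hab (π.hi_inj ((Fin.ext hh).trans hyb))
        omega
      have elo : ∀ m, m ≠ a → s (π.lo m) = π.lo m := fun m hm =>
        hsfix _ (fun h => hm (π.lo_inj (h.trans hxa))) (fun h => π.lo_ne_hi m b (h.trans hyb))
      have ehi : ∀ m, m ≠ b → s (π.hi m) = π.hi m := fun m hm =>
        hsfix _ (fun h => π.lo_ne_hi a m (h.trans hxa).symm)
          (fun h => hm (π.hi_inj (h.trans hyb)))
      have eloa : s (π.lo a) = y := by rw [← hxa]; exact hsx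
      have ehib : s (π.hi b) = x := by rw [← hyb]; exact hsy
      have lolt' : ∀ m, (fun m => s (π.lo m)) m < (fun m => s (π.hi m)) m := by
        intro m
        show s (π.lo m) < s (π.hi m)
        by_cases hma : m = a
        · rw [hma, eloa, ehi a hab, Fin.lt_def]
          omega
        · by_cases hmb : m = b
          · rw [hmb, elo b hlba.ne, ehib, Fin.lt_def]
            omega
          · rw [elo m hma, ehi m hmb]; exact π.lo_lt_hi m
      have mono' : StrictMono (fun m => s (π.lo m)) := by
        intro l m hlm
        show s (π.lo l) < s (π.lo m)
        by_cases hla : l = a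
        · by_cases hma : m = a
          · rw [hla, hma] at hlm; exact absurd hlm (lt_irrefl _)
          · rw [hla, eloa, elo m hma]
            have h1 : (π.lo a : ℕ) < (π.lo m : ℕ) := by
              rw [← hla]; exact Fin.lt_def.mp (π.lo_strictMono hlm)
            have h2 : (π.lo m : ℕ) ≠ (y:ℕ) := fun hh => π.lo_ne_hi m b ((Fin.ext hh).trans hyb)
            rw [Fin.lt_def]; omega
        · by_cases hma : m = a
          · rw [hma, eloa, elo l hla]
            have h1 : (π.lo l:ℕ) < (π.lo a:ℕ) := by
              rw [← hma]; exact Fin.lt_def.mp (π.lo_strictMono hlm)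
            rw [Fin.lt_def]; omega
          · rw [elo l hla, elo m hma]; exact π.lo_strictMono hlm
      set π' : Pairing p := ⟨fun m => s (π.lo m), fun m => s (π.hi m), lolt', mono', huniq⟩
        with hπ'
      have hlo' : ∀ m, π'.lo m = s (π.lo m) := fun m => rfl
      have hhi' : ∀ m, π'.hi m = s (π.hi m) := fun m => rfl
      have hWlo' : ∀ l, (W ∘ s) (π'.lo l) = (V l : C) := by
        intro l; show W (s (s (π.lo l))) = _; rw [hss]; exact hWlo l
      have hWhi' : ∀ m, (W ∘ s) (π'.hi m) = ((V m)⁻¹ : Cˣ) := by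
        intro m; show W (s (s (π.hi m))) = _; rw [hss]; exact hWhi m
      have hμ' : (∑ m : Fin p, (p - (m:ℕ)) * ((π'.hi m : ℕ))) < n := by
        rw [← hμ]
        apply Finset.sum_lt_sum
        · intro m _
          by_cases hmb : m = b
          · rw [hmb, hhi' b, ehib]
            apply Nat.mul_le_mul_left
            omega
          · rw [hhi' m, ehi m hmb]
        · refine ⟨b, Finset.mem_univ b, ?_⟩
          rw [hhi' b, ehib]
          have hxlt : (x:ℕ) < (π.hi b : ℕ) := by omega
          have hk : 0 < p - (b:ℕ) := by have := b.isLt; omega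
          exact mul_lt_mul_of_pos_left hxlt hk
      have hIH := ih _ hμ' π' (W ∘ s) hWlo' hWhi' rfl
      have hC'ba : ¬ π'.Cross b a := by
        rintro (⟨h1, h2, h3⟩ | ⟨h1, h2, h3⟩)
        · rw [hlo' a, hhi' b, eloa, ehib, Fin.lt_def] at h2; omega
        · rw [hlo' a, hlo' b, eloa, elo b hlba.ne, Fin.lt_def] at h1; omega
      have hCba : π.Cross b a := by
        left
        refine ⟨π.lo_strictMono hlba, ?_, ?_⟩
        · rw [← hxa, ← hyb]; exact Fin.lt_def.mpr (by omega)
        · rw [← hyb]; exact Fin.lt_def.mpr hhiay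
      have hSeq : Finset.univ.filter
            (fun lm : Fin p × Fin p => lm.1 < lm.2 ∧ π.Cross lm.1 lm.2)
          = insert (b, a) (Finset.univ.filter
            (fun lm : Fin p × Fin p => lm.1 < lm.2 ∧ π'.Cross lm.1 lm.2)) := by
        ext lm
        simp only [Finset.mem_filter, Finset.mem_univ, true_and, Finset.mem_insert]
        constructor
        · rintro ⟨hlt, hcr⟩
          by_cases hlm : lm = (b, a)
          · exact Or.inl hlm
          · refine Or.inr ⟨hlt, ?_⟩
            rw [cross_swap_iff π x y hxy a b hyb (Or.inl hxa) π' hlo' hhi' lm.1 lm.2 hlt.ne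
              (by rintro ⟨h1', h2'⟩; rw [h1', h2'] at hlt; exact absurd hlt (not_lt.mpr hlba.le))
              (by rintro ⟨h1', h2'⟩;
                  exact hlm (Prod.ext h1' h2'))]
            exact hcr
        · rintro (heq | ⟨hlt, hcr⟩)
          · rw [heq]; exact ⟨hlba, hCba⟩
          · refine ⟨hlt, ?_⟩
            have h2' : ¬(lm.1 = b ∧ lm.2 = a) := by
              rintro ⟨e1, e2⟩; rw [e1, e2] at hcr; exact hC'ba hcr
            rw [← cross_swap_iff π x y hxy a b hyb (Or.inl hxa) π' hlo' hhi' lm.1 lm.2 hlt.ne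
              (by rintro ⟨h1', h2''⟩; rw [h1', h2''] at hlt; exact absurd hlt (not_lt.mpr hlba.le))
              h2']
            exact hcr
      have hnotmem : (b, a) ∉ Finset.univ.filter
          (fun lm : Fin p × Fin p => lm.1 < lm.2 ∧ π'.Cross lm.1 lm.2) := by
        simp only [Finset.mem_filter, Finset.mem_univ, true_and, not_and]
        exact fun _ => hC'ba
      have hWx : W x = (V a : C) := by rw [hxa]; exact hWlo a
      have hWy : W y = ((V b)⁻¹ : Cˣ) := by rw [hyb]; exact hWhi b
      have hrel : W x * W y = γ b a • (W y * W x) := by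
        rw [hWx, hWy]
        exact unit_comm₁ (V a) (V b) (γ b a) (hcomm b a hlba)
      have hprod := list_swap_prod W x y hxy (γ b a) hrel
      rw [hprod, hIH, smul_smul, hSeq, Finset.prod_insert hnotmem]
    · -- Case B : x = hi a, y = hi b, b < a
      have hab : a ≠ b := hba.ne'
      have hyv : (y:ℕ) = (π.hi b:ℕ) := congrArg Fin.val hyb
      have hxv : (x:ℕ) = (π.hi a:ℕ) := congrArg Fin.val hxa
      have hloax : (π.lo a : ℕ) < (x:ℕ) := by
        have h1 := Fin.lt_def.mp (π.lo_lt_hi a)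
        omega
      have hlobx : (π.lo b : ℕ) < (x:ℕ) := by
        have h1 := Fin.lt_def.mp (π.lo_lt_hi b)
        have h2 : (π.lo b:ℕ) ≠ (x:ℕ) := fun hh => π.lo_ne_hi b a ((Fin.ext hh).trans hxa)
        omega
      have elo : ∀ m, s (π.lo m) = π.lo m := fun m =>
        hsfix _ (fun h => π.lo_ne_hi m a (h.trans hxa)) (fun h => π.lo_ne_hi m b (h.trans hyb))
      have ehia : s (π.hi a) = y := by rw [← hxa]; exact hsx
      have ehib : s (π.hi b) = x := by rw [← hyb]; exact hsy
      have ehi : ∀ m, m ≠ a → m ≠ b → s (π.hi m) = π.hi m := fun m h1 h2 =>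
        hsfix _ (fun h => h1 (π.hi_inj (h.trans hxa))) (fun h => h2 (π.hi_inj (h.trans hyb)))
      have lolt' : ∀ m, (fun m => s (π.lo m)) m < (fun m => s (π.hi m)) m := by
        intro m
        show s (π.lo m) < s (π.hi m)
        by_cases hma : m = a
        · rw [hma, elo a, ehia, Fin.lt_def]; omega
        · by_cases hmb : m = b
          · rw [hmb, elo b, ehib, Fin.lt_def]; omega
          · rw [elo m, ehi m hma hmb]; exact π.lo_lt_hi m
      have mono' : StrictMono (fun m => s (π.lo m)) := by
        intro l m hlm
        show s (π.lo l) < s (π.lo m)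
        rw [elo l, elo m]; exact π.lo_strictMono hlm
      set π' : Pairing p := ⟨fun m => s (π.lo m), fun m => s (π.hi m), lolt', mono', huniq⟩
        with hπ'
      have hlo' : ∀ m, π'.lo m = s (π.lo m) := fun m => rfl
      have hhi' : ∀ m, π'.hi m = s (π.hi m) := fun m => rfl
      have hWlo' : ∀ l, (W ∘ s) (π'.lo l) = (V l : C) := by
        intro l; show W (s (s (π.lo l))) = _; rw [hss]; exact hWlo l
      have hWhi' : ∀ m, (W ∘ s) (π'.hi m) = ((V m)⁻¹ : Cˣ) := by
        intro m; show W (s (s (π.hi m))) = _; rw [hss]; exact hWhi m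
      have hμ' : (∑ m : Fin p, (p - (m:ℕ)) * ((π'.hi m : ℕ))) < n := by
        rw [← hμ]
        have decomp : ∀ g : Fin p → ℕ, (∑ m : Fin p, g m)
            = g a + (g b + ∑ m ∈ (Finset.univ.erase a).erase b, g m) := by
          intro g
          rw [← Finset.add_sum_erase _ g (Finset.mem_univ a)]
          congr 1
          rw [← Finset.add_sum_erase _ g (Finset.mem_erase.mpr ⟨hba.ne, Finset.mem_univ b⟩)]
        rw [decomp, decomp]
        have hrest : (∑ m ∈ (Finset.univ.erase a).erase b, (p - (m:ℕ)) * ((π'.hi m : ℕ)))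
            = ∑ m ∈ (Finset.univ.erase a).erase b, (p - (m:ℕ)) * ((π.hi m : ℕ)) := by
          apply Finset.sum_congr rfl
          intro m hm
          simp only [Finset.mem_erase] at hm
          rw [hhi' m, ehi m hm.2.1 hm.1]
        rw [hrest, hhi' a, hhi' b, ehia, ehib, ← hxv, ← hyv]
        have h2 : (p - (a:ℕ)) < (p - (b:ℕ)) := by
          have := a.isLt; have := Fin.lt_def.mp hba; omega
        have e1 : (p - (a:ℕ)) * (y:ℕ) = (p - (a:ℕ)) * (x:ℕ) + (p - (a:ℕ)) := by
          rw [hxy, Nat.mul_succ]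
        have e2 : (p - (b:ℕ)) * (y:ℕ) = (p - (b:ℕ)) * (x:ℕ) + (p - (b:ℕ)) := by
          rw [hxy, Nat.mul_succ]
        omega
      have hIH := ih _ hμ' π' (W ∘ s) hWlo' hWhi' rfl
      have hC'ba : π'.Cross b a := by
        left
        refine ⟨?_, ?_, ?_⟩
        · rw [hlo' b, hlo' a, elo b, elo a]; exact π.lo_strictMono hba
        · rw [hlo' a, hhi' b, elo a, ehib]; exact Fin.lt_def.mpr hloax
        · rw [hhi' b, hhi' a, ehib, ehia]; exact Fin.lt_def.mpr (by omega)
      have hCba : ¬ π.Cross b a := by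
        rintro (⟨h1, h2, h3⟩ | ⟨h1, h2, h3⟩)
        · rw [Fin.lt_def] at h3; omega
        · exact absurd h1 (asymm (π.lo_strictMono hba))
      have hSeq : Finset.univ.filter
            (fun lm : Fin p × Fin p => lm.1 < lm.2 ∧ π'.Cross lm.1 lm.2)
          = insert (b, a) (Finset.univ.filter
            (fun lm : Fin p × Fin p => lm.1 < lm.2 ∧ π.Cross lm.1 lm.2)) := by
        ext lm
        simp only [Finset.mem_filter, Finset.mem_univ, true_and, Finset.mem_insert]
        constructor
        · rintro ⟨hlt, hcr⟩
          by_cases hlm : lm = (b, a)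
          · exact Or.inl hlm
          · refine Or.inr ⟨hlt, ?_⟩
            rw [← cross_swap_iff π x y hxy a b hyb (Or.inr hxa) π' hlo' hhi' lm.1 lm.2 hlt.ne
              (by rintro ⟨h1', h2'⟩; rw [h1', h2'] at hlt; exact absurd hlt (not_lt.mpr hba.le))
              (by rintro ⟨h1', h2'⟩; exact hlm (Prod.ext h1' h2'))]
            exact hcr
        · rintro (heq | ⟨hlt, hcr⟩)
          · rw [heq]; exact ⟨hba, hC'ba⟩
          · refine ⟨hlt, ?_⟩
            have h2' : ¬(lm.1 = b ∧ lm.2 = a) := by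
              rintro ⟨e1, e2⟩; rw [e1, e2] at hcr; exact hCba hcr
            rw [cross_swap_iff π x y hxy a b hyb (Or.inr hxa) π' hlo' hhi' lm.1 lm.2 hlt.ne
              (by rintro ⟨h1', h2''⟩; rw [h1', h2''] at hlt; exact absurd hlt (not_lt.mpr hba.le))
              h2']
            exact hcr
      have hnotmem : (b, a) ∉ Finset.univ.filter
          (fun lm : Fin p × Fin p => lm.1 < lm.2 ∧ π.Cross lm.1 lm.2) := by
        simp only [Finset.mem_filter, Finset.mem_univ, true_and, not_and]
        exact fun _ => hCba
      have hWx : W x = ((V a)⁻¹ : Cˣ) := by rw [hxa]; exact hWhi a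
      have hWy : W y = ((V b)⁻¹ : Cˣ) := by rw [hyb]; exact hWhi b
      have hrel : (W ∘ s) x * (W ∘ s) y = γ b a • ((W ∘ s) y * (W ∘ s) x) := by
        have e1 : (W ∘ s) x = W y := by show W (s x) = W y; rw [hsx]
        have e2 : (W ∘ s) y = W x := by show W (s y) = W x; rw [hsy]
        rw [e1, e2, hWx, hWy]
        exact unit_comm₂ (V a) (V b) (γ b a) (hcomm b a hba)
      have hprod := list_swap_prod (W ∘ s) x y hxy (γ b a) hrel
      have hWss : (W ∘ s) ∘ (Equiv.swap x y) = W := by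
        funext z
        show W (s (s z)) = W z
        rw [hss]
      rw [hWss, hIH, hSeq, Finset.prod_insert hnotmem] at hprod
      have key : γ b a • ((∏ lm ∈ Finset.univ.filter
            (fun lm : Fin p × Fin p => lm.1 < lm.2 ∧ π.Cross lm.1 lm.2),
          γ lm.1 lm.2) • (1 : C)) = γ b a • (List.ofFn W).prod := by
        rw [smul_smul]; exact hprod
      have hkey2 := congrArg (fun t => (γ b a)⁻¹ • t) key
      simp only [inv_smul_smul₀ (hγ b a hba)] at hkey2
      exact hkey2.symm
  · -- base case : identity pairing
    have hadj : ∀ (k : ℕ) (hk : k + 1 < 2*p),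
        π.K ⟨k, by omega⟩ < π.K ⟨k+1, hk⟩ := by
      intro k hk
      set x : Fin (2*p) := ⟨k, by omega⟩ with hxdef
      set y : Fin (2*p) := ⟨k+1, hk⟩ with hydef
      have hxy : (y:ℕ) = (x:ℕ) + 1 := rfl
      have hxlty : x < y := by rw [Fin.lt_def]; omega
      rcases π.idx_spec x with hxa | hxa <;> rcases π.idx_spec y with hyb | hyb
      · rw [hxa, hyb, π.K_lo, π.K_lo]
        have h' : π.lo (π.idx x) < π.lo (π.idx y) := by rw [← hxa, ← hyb]; exact hxlty
        have h2 := Fin.lt_def.mp (π.lo_strictMono.lt_iff_lt.mp h')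
        omega
      · by_cases hab : π.idx x = π.idx y
        · rw [hxa, hyb, π.K_lo, π.K_hi, hab]; omega
        · exact absurd ⟨π.idx x, π.idx y, x, y, hxy, Or.inl ⟨hxa, hyb, hab⟩⟩ hdesc
      · rw [hxa, hyb, π.K_hi, π.K_lo]
        have h' : π.lo (π.idx x) < π.lo (π.idx y) := by
          calc π.lo (π.idx x) < π.hi (π.idx x) := π.lo_lt_hi _
            _ = x := hxa.symm
            _ < y := hxlty
            _ = π.lo (π.idx y) := hyb
        have h2 := Fin.lt_def.mp (π.lo_strictMono.lt_iff_lt.mp h')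
        omega
      · have hne : π.idx x ≠ π.idx y := by
          intro h
          have hxy' : x = y := hxa.trans (by rw [h, ← hyb])
          rw [Fin.ext_iff] at hxy'; omega
        rcases lt_or_gt_of_ne hne with hlt | hgt
        · rw [hxa, hyb, π.K_hi, π.K_hi]
          have := Fin.lt_def.mp hlt; omega
        · exact absurd ⟨π.idx x, π.idx y, x, y, hxy, Or.inr ⟨hxa, hyb, hgt⟩⟩ hdesc
    have hKlt : ∀ z, π.K z < 2*p := by
      intro z
      have := (π.idx z).isLt
      unfold Pairing.K
      split_ifs <;> omega
    have hKmono : StrictMono (fun z : Fin (2*p) => (⟨π.K z, hKlt z⟩ : Fin (2*p))) := by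
      have hm := strictMono_of_adj (fun z : Fin (2*p) => π.K z) hadj
      intro u v huv
      rw [Fin.lt_def]
      exact hm huv
    have hKid : ∀ z : Fin (2*p), π.K z = (z:ℕ) := by
      intro z
      have := fin_strictMono_id _ hKmono z
      rw [Fin.ext_iff] at this
      exact this
    have hlov : ∀ m : Fin p, ((π.lo m : ℕ)) = 2*(m:ℕ) := fun m => by
      rw [← hKid (π.lo m), π.K_lo]
    have hhiv : ∀ m : Fin p, ((π.hi m : ℕ)) = 2*(m:ℕ)+1 := fun m => by
      rw [← hKid (π.hi m), π.K_hi]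
    have hempty : Finset.univ.filter
        (fun lm : Fin p × Fin p => lm.1 < lm.2 ∧ π.Cross lm.1 lm.2) = ∅ := by
      ext lm
      simp only [Finset.mem_filter, Finset.mem_univ, true_and, Finset.notMem_empty, iff_false]
      rintro ⟨hlt, hcr⟩
      have a1 := hlov lm.1
      have a2 := hlov lm.2
      have a3 := hhiv lm.1
      have a4 := hhiv lm.2
      have a5 := Fin.lt_def.mp hlt
      rcases hcr with ⟨h1, h2, h3⟩ | ⟨h1, h2, h3⟩ <;>
      · rw [Fin.lt_def] at h1 h2 h3
        omega
    rw [hempty, Finset.prod_empty, one_smul]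
    apply prod_pairs p W
    intro k hk
    have hkp : k < p := by omega
    have e1 : (⟨2*k, by omega⟩ : Fin (2*p)) = π.lo ⟨k, hkp⟩ := by
      rw [Fin.ext_iff, hlov]
    have e2 : (⟨2*k+1, hk⟩ : Fin (2*p)) = π.hi ⟨k, hkp⟩ := by
      rw [Fin.ext_iff, hhiv]
    rw [e1, e2, hWlo, hWhi, ← Units.val_mul]
    simp

open scoped Classical in
/-- **Lemma 3.2.** If `V₁, …, V_p` are invertible elements of a unital
`ℂ`-algebra satisfying `V_l V_m = γ_{lm} V_m V_l` for `l < m`, and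
`W₁, …, W_{2p}` are defined by `W_i = V_l` if `i = min(B_l)` and
`W_i = V_m⁻¹` if `i = max(B_m)`, for a pairing `π = {B₁, …, B_p}` whose blocks
are listed in increasing order of their minimal elements, then
`W₁ W₂ ⋯ W_{2p} = (∏_{l < m, B_l crosses B_m} γ_{lm}) · 1`. -/
theorem prod_of_pairing_word (p : ℕ) (hp : 0 < p) (π : Pairing p)
    (C : Type*) [Ring C] [Algebra ℂ C]
    (V : Fin p → Cˣ) (γ : Fin p → Fin p → ℂ)
    (hcomm : ∀ l m : Fin p, l < m → (V l : C) * (V m : C) = γ l m • ((V m : C) * (V l : C)))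
    (W : Fin (2 * p) → C)
    (hWlo : ∀ l, W (π.lo l) = V l)
    (hWhi : ∀ m, W (π.hi m) = ((V m)⁻¹ : Cˣ)) :
    (List.ofFn W).prod =
      (∏ lm ∈ Finset.univ.filter
          (fun lm : Fin p × Fin p => lm.1 < lm.2 ∧ π.Cross lm.1 lm.2),
        γ lm.1 lm.2) • (1 : C) := by
  rcases subsingleton_or_nontrivial C with hC | hC
  · apply Subsingleton.elim
  · have hγ : ∀ l m : Fin p, l < m → γ l m ≠ 0 := by
      intro l m hlt h0
      have h := hcomm l m hlt
      rw [h0, zero_smul] at h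
      have h1 : ((V l * V m : Cˣ) : C) = 0 := by rw [Units.val_mul]; exact h
      have h2 := Units.mul_inv (V l * V m)
      rw [h1, zero_mul] at h2
      exact one_ne_zero h2.symm
    exact aux_pairing V γ hcomm hγ _ π W hWlo hWhi rfl
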